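/- arXiv:2111.02227 — 2 statements merged into one kernel-verified Lean document; each statement's English description precedes it below -/
import Mathlib

section
/- Let u ∈ L²(ℝ) and s > 0, and suppose the system of translates {T_{sk} u : k ∈ ℤ} is an ω-independent Bessel sequence in L²(ℝ). Let c ∈ ℓ²_O(ℤ). Then the unconditionally convergent series f = Σ_{k∈ℤ} c_k T_{sk} u and f_× = Σ_{k∈ℤ} conj(c_k) T_{sk} u do not agree up to a global phase: there is no ν ∈ ℂ with |ν| = 1 and f = ν·f_×. -/
open MeasureTheory Complex Real
open scoped ENNReal
set_option maxHeartbeats 1000000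

/-- The short-time Fourier transform of `f ∈ L²(ℝ)` with respect to the window `g ∈ L²(ℝ)`:
`V_g f (x, ω) = ∫ f(t) conj(g(t-x)) e^{-2πiωt} dt`. -/
noncomputable def STFT (g f : Lp ℂ 2 (volume : Measure ℝ)) (x ω : ℝ) : ℂ :=
  ∫ t : ℝ, f t * (starRingEnd ℂ) (g (t - x)) * Complex.exp (-2 * Real.pi * Complex.I * ω * t)

/-- `f` and `h` agree up to a global phase: `f = ν • h` for some unimodular `ν ∈ ℂ`. -/
def SamePhase (f h : Lp ℂ 2 (volume : Measure ℝ)) : Prop :=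
  ∃ ν : ℂ, ‖ν‖ = 1 ∧ f = ν • h

/-- Translation operator `T_τ` on `L²(ℝ)`: `(T_τ f)(t) = f (t - τ)`. -/
noncomputable def Translate (τ : ℝ) (f : Lp ℂ 2 (volume : Measure ℝ)) :
    Lp ℂ 2 (volume : Measure ℝ) :=
  Lp.compMeasurePreserving (fun t => t - τ) (measurePreserving_sub_right volume τ) f

/-- A family `x : ℤ → L²(ℝ)` is a Bessel sequence if `∑ₖ |⟨f, xₖ⟩|² < ∞` for every `f ∈ L²(ℝ)`. -/
def IsBessel (x : ℤ → Lp ℂ 2 (volume : Measure ℝ)) : Prop :=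
  ∀ f : Lp ℂ 2 (volume : Measure ℝ), Summable fun k : ℤ => ‖(inner ℂ f (x k) : ℂ)‖ ^ 2

/-- The values of the sequence `c : ℤ → ℂ` do not all lie on a single line through the
origin of the complex plane (the defining property of `ℓ²_𝒪(ℤ)`). -/
def NotOnLine (c : ℤ → ℂ) : Prop :=
  ¬ ∃ α : ℝ, ∀ k : ℤ, ∃ r : ℝ, c k = Complex.exp (α * Complex.I) * r

section BesselAux

variable {H : Type*} [NormedAddCommGroup H] [InnerProductSpace ℂ H] [CompleteSpace H]

theorem bessel_memℓp (x : ℤ → H)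
    (hB : ∀ f : H, Summable fun k : ℤ => ‖(inner ℂ f (x k) : ℂ)‖ ^ 2) (f : H) :
    Memℓp (fun k : ℤ => (inner ℂ (x k) f : ℂ)) 2 := by
  apply memℓp_gen
  have heq : ∀ k : ℤ, ‖(inner ℂ (x k) f : ℂ)‖ ^ (2 : ℝ≥0∞).toReal
      = ‖(inner ℂ f (x k) : ℂ)‖ ^ 2 := by
    intro k
    rw [norm_inner_symm]
    norm_num
  exact (summable_congr heq).mpr (hB f)

noncomputable def besselLinear (x : ℤ → H)
    (hB : ∀ f : H, Summable fun k : ℤ => ‖(inner ℂ f (x k) : ℂ)‖ ^ 2) :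
    H →ₗ[ℂ] lp (fun _ : ℤ => ℂ) 2 where
  toFun f := ⟨fun k => (inner ℂ (x k) f : ℂ), bessel_memℓp x hB f⟩
  map_add' f g := by
    apply Subtype.ext
    funext k
    simp only [lp.coeFn_add, Pi.add_apply]
    exact inner_add_right _ _ _
  map_smul' m f := by
    apply Subtype.ext
    funext k
    simp [inner_smul_right]

noncomputable def besselAnalysis (x : ℤ → H)
    (hB : ∀ f : H, Summable fun k : ℤ => ‖(inner ℂ f (x k) : ℂ)‖ ^ 2) :
    H →L[ℂ] lp (fun _ : ℤ => ℂ) 2 where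
  toLinearMap := besselLinear x hB
  cont := by
    apply (besselLinear x hB).continuous_of_seq_closed_graph
    intro v f y hv hy
    apply Subtype.ext
    funext k
    have h1 : Filter.Tendsto (fun n => (inner ℂ (x k) (v n) : ℂ)) Filter.atTop
        (nhds (inner ℂ (x k) f : ℂ)) := Filter.Tendsto.inner tendsto_const_nhds hv
    have h2 : Filter.Tendsto (fun n => (inner ℂ (x k) (v n) : ℂ)) Filter.atTop (nhds (y k)) := by
      rw [tendsto_iff_norm_sub_tendsto_zero]
      have hb : ∀ n, ‖(inner ℂ (x k) (v n) : ℂ) - y k‖ ≤ ‖besselLinear x hB (v n) - y‖ := by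
        intro n
        have := lp.norm_apply_le_norm (by norm_num : (2 : ℝ≥0∞) ≠ 0)
          (besselLinear x hB (v n) - y) k
        exact this
      have h0 : Filter.Tendsto (fun n => ‖besselLinear x hB (v n) - y‖) Filter.atTop (nhds 0) := by
        rw [← tendsto_iff_norm_sub_tendsto_zero]
        exact hy
      exact squeeze_zero (fun n => norm_nonneg _) hb h0
    exact tendsto_nhds_unique h2 h1

theorem besselAnalysis_apply (x : ℤ → H)
    (hB : ∀ f : H, Summable fun k : ℤ => ‖(inner ℂ f (x k) : ℂ)‖ ^ 2) (f : H) (k : ℤ) :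
    (besselAnalysis x hB f : ∀ _ : ℤ, ℂ) k = (inner ℂ (x k) f : ℂ) := rfl

/-- The Bessel bound on finite synthesis sums. -/
theorem bessel_finset_bound (x : ℤ → H)
    (hB : ∀ f : H, Summable fun k : ℤ => ‖(inner ℂ f (x k) : ℂ)‖ ^ 2)
    (F : Finset ℤ) (b : ℤ → ℂ) :
    ‖∑ k ∈ F, b k • x k‖ ≤ ‖besselAnalysis x hB‖ * Real.sqrt (∑ k ∈ F, ‖b k‖ ^ 2) := by
  set C := besselAnalysis x hB with hC
  set v := ∑ k ∈ F, b k • x k with hv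
  set S := Real.sqrt (∑ k ∈ F, ‖b k‖ ^ 2) with hS
  have hS0 : 0 ≤ S := Real.sqrt_nonneg _
  have h1 : (inner ℂ v v : ℂ) = ∑ k ∈ F, (starRingEnd ℂ) (b k) * (inner ℂ (x k) v : ℂ) := by
    rw [hv, sum_inner]
    simp [inner_smul_left, inner_sum, inner_smul_right]
    refine Finset.sum_congr rfl fun i _ => ?_
    rw [Finset.mul_sum]
    exact Finset.sum_congr rfl fun j _ => by ring
  have h2 : ‖v‖ ^ 2 = ‖(inner ℂ v v : ℂ)‖ := by
    rw [@inner_self_eq_norm_sq_to_K ℂ]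
    simp [norm_pow]
  have h3 : ‖(inner ℂ v v : ℂ)‖ ≤ ∑ k ∈ F, ‖b k‖ * ‖(inner ℂ (x k) v : ℂ)‖ := by
    rw [h1]
    refine le_trans (norm_sum_le _ _) ?_
    apply Finset.sum_le_sum
    intro k _
    rw [norm_mul, RCLike.norm_conj]
  have h4 : ∑ k ∈ F, ‖b k‖ * ‖(inner ℂ (x k) v : ℂ)‖ ≤
      S * Real.sqrt (∑ k ∈ F, ‖(inner ℂ (x k) v : ℂ)‖ ^ 2) :=
    Real.sum_mul_le_sqrt_mul_sqrt _ _ _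
  have h5 : ∑ k ∈ F, ‖(inner ℂ (x k) v : ℂ)‖ ^ 2 ≤ ‖C v‖ ^ 2 := by
    have hle := lp.sum_rpow_le_norm_rpow (p := 2) (by norm_num) (C v) F
    have he : ∀ k : ℤ, ‖(C v : ∀ _ : ℤ, ℂ) k‖ ^ (2 : ℝ≥0∞).toReal
        = ‖(inner ℂ (x k) v : ℂ)‖ ^ 2 := by
      intro k
      rw [hC, besselAnalysis_apply]
      norm_num
    rw [Finset.sum_congr rfl (fun k _ => (he k).symm)]
    refine le_trans hle (le_of_eq ?_)
    norm_num
  have h6 : Real.sqrt (∑ k ∈ F, ‖(inner ℂ (x k) v : ℂ)‖ ^ 2) ≤ ‖C v‖ := by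
    refine le_trans (Real.sqrt_le_sqrt h5) ?_
    rw [Real.sqrt_sq (norm_nonneg _)]
  have h7 : ‖C v‖ ≤ ‖C‖ * ‖v‖ := C.le_opNorm v
  have hmain : ‖v‖ ^ 2 ≤ (‖C‖ * S) * ‖v‖ := by
    calc ‖v‖ ^ 2 = ‖(inner ℂ v v : ℂ)‖ := h2
      _ ≤ ∑ k ∈ F, ‖b k‖ * ‖(inner ℂ (x k) v : ℂ)‖ := h3
      _ ≤ S * Real.sqrt (∑ k ∈ F, ‖(inner ℂ (x k) v : ℂ)‖ ^ 2) := h4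
      _ ≤ S * (‖C‖ * ‖v‖) := mul_le_mul_of_nonneg_left (le_trans h6 h7) hS0
      _ = (‖C‖ * S) * ‖v‖ := by ring
  by_cases h : ‖v‖ = 0
  · rw [h]
    positivity
  · have hpos : 0 < ‖v‖ := lt_of_le_of_ne (norm_nonneg v) (Ne.symm h)
    have hvv : ‖v‖ * ‖v‖ ≤ ‖C‖ * S * ‖v‖ := by rw [← sq]; exact hmain
    exact le_of_mul_le_mul_right hvv hpos

theorem bessel_summable_smul (x : ℤ → H)
    (hB : ∀ f : H, Summable fun k : ℤ => ‖(inner ℂ f (x k) : ℂ)‖ ^ 2)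
    (a : ℤ → ℂ) (ha : Summable fun k : ℤ => ‖a k‖ ^ 2) :
    Summable fun k : ℤ => a k • x k := by
  set B := ‖besselAnalysis x hB‖ with hBdef
  have hB0 : 0 ≤ B := norm_nonneg _
  rw [summable_iff_vanishing_norm]
  intro ε hε
  set q := ε / (B + 1) with hq
  have hq0 : 0 < q := div_pos hε (by linarith)
  obtain ⟨s, hs⟩ := summable_iff_vanishing_norm.mp ha (q ^ 2) (by positivity)
  refine ⟨s, fun t ht => ?_⟩
  have h1 : ∑ k ∈ t, ‖a k‖ ^ 2 < q ^ 2 := by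
    calc ∑ k ∈ t, ‖a k‖ ^ 2 ≤ ‖∑ k ∈ t, ‖a k‖ ^ 2‖ := le_abs_self _
      _ < q ^ 2 := hs t ht
  have h2 : Real.sqrt (∑ k ∈ t, ‖a k‖ ^ 2) < q := by
    have := Real.sqrt_lt_sqrt (Finset.sum_nonneg fun k _ => by positivity) h1
    rwa [Real.sqrt_sq hq0.le] at this
  have h3 := bessel_finset_bound x hB t a
  have hBq : B * q < ε := by
    calc B * q < (B + 1) * q := by
          exact mul_lt_mul_of_pos_right (by linarith) hq0
      _ = ε := by
          rw [hq]
          field_simp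
  calc ‖∑ k ∈ t, a k • x k‖ ≤ B * Real.sqrt (∑ k ∈ t, ‖a k‖ ^ 2) := h3
    _ ≤ B * q := mul_le_mul_of_nonneg_left h2.le hB0
    _ < ε := hBq

end BesselAux

/-- If `{T_{sk} u : k ∈ ℤ}` is an ω-independent Bessel sequence and `c ∈ ℓ²_𝒪(ℤ)`, then the
unconditionally convergent series `f = ∑ₖ cₖ T_{sk} u` and `f_× = ∑ₖ conj(cₖ) T_{sk} u` do not
agree up to a global phase. -/
theorem stmt10 (u : Lp ℂ 2 (volume : Measure ℝ)) (s : ℝ) (hs : 0 < s)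
    (hBessel : IsBessel fun k : ℤ => Translate (s * k) u)
    (hIndep : ∀ a : ℤ → ℂ, HasSum (fun k : ℤ => a k • Translate (s * k) u) 0 → ∀ k, a k = 0)
    (c : ℤ → ℂ) (hc2 : Summable fun k : ℤ => ‖c k‖ ^ 2) (hc : NotOnLine c) :
    ∃ f fₓ : Lp ℂ 2 (volume : Measure ℝ),
      HasSum (fun k : ℤ => c k • Translate (s * k) u) f ∧
      HasSum (fun k : ℤ => (starRingEnd ℂ) (c k) • Translate (s * k) u) fₓ ∧
      ¬ SamePhase f fₓ := by
  set x : ℤ → Lp ℂ 2 (volume : Measure ℝ) := fun k => Translate (s * k) u with hx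
  obtain ⟨f, hf⟩ := bessel_summable_smul x hBessel c hc2
  have hc2' : Summable fun k : ℤ => ‖(starRingEnd ℂ) (c k)‖ ^ 2 := by
    simpa [RCLike.norm_conj] using hc2
  obtain ⟨fx, hfx⟩ := bessel_summable_smul x hBessel _ hc2'
  refine ⟨f, fx, hf, hfx, ?_⟩
  rintro ⟨ν, hν, hfeq⟩
  have h2 : HasSum (fun k : ℤ => (ν * (starRingEnd ℂ) (c k)) • x k) (ν • fx) := by
    simpa [smul_smul] using hfx.const_smul ν
  have h0 : HasSum (fun k : ℤ => (c k - ν * (starRingEnd ℂ) (c k)) • x k) 0 := by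
    have hd := hf.sub h2
    rw [hfeq, sub_self] at hd
    simpa [sub_smul] using hd
  have hck : ∀ k : ℤ, c k = ν * (starRingEnd ℂ) (c k) := by
    intro k
    have := hIndep _ h0 k
    linear_combination this
  have hν0 : ν ≠ 0 := by
    intro h
    rw [h, norm_zero] at hν
    norm_num at hν
  set α := ν.arg / 2 with hα
  set w := Complex.exp ((α : ℂ) * Complex.I) with hw
  have hw0 : w ≠ 0 := Complex.exp_ne_zero _
  have hνw : ν = w * w := by
    have habs : (‖ν‖ : ℂ) = 1 := by
      rw [hν]
      norm_num
    have harg := Complex.norm_mul_exp_arg_mul_I ν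
    rw [habs, one_mul] at harg
    rw [← harg, hw, ← Complex.exp_add]
    congr 1
    push_cast [hα]
    ring
  have hconjw : (starRingEnd ℂ) w = w⁻¹ := by
    rw [hw, ← Complex.exp_conj, ← Complex.exp_neg]
    congr 1
    simp [Complex.conj_ofReal]
  apply hc
  refine ⟨α, fun k => ?_⟩
  have h1 : (starRingEnd ℂ) (c k) = w⁻¹ * w⁻¹ * c k := by
    have hk := hck k
    rw [hνw] at hk
    field_simp
    linear_combination -hk
  set z := w⁻¹ * c k with hz
  have hzreal : (starRingEnd ℂ) z = z := by
    rw [hz, map_mul, map_inv₀, hconjw, inv_inv, h1]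
    field_simp
  have hzre : (z.re : ℂ) = z := Complex.conj_eq_iff_re.mp hzreal
  refine ⟨z.re, ?_⟩
  rw [hzre, hz, ← hw]
  field_simp
end

section
/- Let g ∈ L²(ℝ) with g ≠ 0, let s > 0, and let c : ℤ → ℂ be any finitely supported sequence belonging to ℓ²_O(ℤ). Then the functions f₁ = Σ_{k∈ℤ} c_k T_{sk}(Rg) and f₂ = Σ_{k∈ℤ} conj(c_k) T_{sk}(Rg) satisfy |V_g f₁(x, n/s)| = |V_g f₂(x, n/s)| for all x ∈ ℝ and n ∈ ℤ (pointwise equal spectrograms on the parallel lines ℝ × (1/s)ℤ), yet f₁ and f₂ do not agree up to a global phase. -/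
open MeasureTheory Complex Real

/-- Reflection operator on `L²(ℝ)`: `(R f)(t) = f (-t)`. -/
noncomputable def Reflect (f : Lp ℂ 2 (volume : Measure ℝ)) : Lp ℂ 2 (volume : Measure ℝ) :=
  Lp.compMeasurePreserving (fun t => -t) (Measure.measurePreserving_neg volume) f

/-! ### Auxiliary lemmas -/

lemma stmt17_lpExt {f g : Lp ℂ 2 (volume : Measure ℝ)} (h : ⇑f =ᵐ[volume] ⇑g) : f = g :=
  Subtype.ext (MeasureTheory.AEEqFun.ext h)

lemma stmt17_translate_coeFn (τ : ℝ) (f : Lp ℂ 2 (volume : Measure ℝ)) :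
    ⇑(Translate τ f) =ᵐ[volume] fun t => f (t - τ) :=
  Lp.coeFn_compMeasurePreserving f _

lemma stmt17_reflect_coeFn (f : Lp ℂ 2 (volume : Measure ℝ)) :
    ⇑(Reflect f) =ᵐ[volume] fun t => f (-t) :=
  Lp.coeFn_compMeasurePreserving f _

lemma stmt17_translate_reflect_coeFn (τ : ℝ) (g : Lp ℂ 2 (volume : Measure ℝ)) :
    ⇑(Translate τ (Reflect g)) =ᵐ[volume] fun t => g (τ - t) := by
  refine (stmt17_translate_coeFn τ (Reflect g)).trans ?_
  have h1 : ⇑(Reflect g) =ᵐ[volume] fun t => g (-t) := stmt17_reflect_coeFn g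
  have h2 := (measurePreserving_sub_right (volume : Measure ℝ)
    τ).quasiMeasurePreserving.ae_eq_comp h1
  filter_upwards [h2] with t ht
  simpa [Function.comp, neg_sub] using ht

lemma stmt17_trans_trans (σ τ : ℝ) (f : Lp ℂ 2 (volume : Measure ℝ)) :
    Translate σ (Translate τ f) = Translate (σ + τ) f := by
  apply stmt17_lpExt
  have h1 : ⇑(Translate σ (Translate τ f)) =ᵐ[volume] fun t => (Translate τ f) (t - σ) :=
    stmt17_translate_coeFn σ _
  have h2 := (measurePreserving_sub_right (volume : Measure ℝ)
    σ).quasiMeasurePreserving.ae_eq_comp (stmt17_translate_coeFn τ f)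
  refine (h1.trans ?_).trans (stmt17_translate_coeFn (σ + τ) f).symm
  filter_upwards [h2] with t ht
  simpa [Function.comp, sub_sub] using ht

lemma stmt17_trans_zero (f : Lp ℂ 2 (volume : Measure ℝ)) : Translate 0 f = f := by
  apply stmt17_lpExt
  refine (stmt17_translate_coeFn 0 f).trans ?_
  filter_upwards with t
  simp
lemma stmt17_eigen {s : ℝ} (hs : 0 < s) (z : ℂ) (v : Lp ℂ 2 (volume : Measure ℝ))
    (hv : Translate s v = z • v) : v = 0 := by
  rcases eq_or_ne z 0 with rfl | hz
  · have h0 : Translate s v = 0 := by simpa using hv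
    have : ‖v‖ = 0 := by
      have := Lp.norm_compMeasurePreserving v (measurePreserving_sub_right volume s)
      rw [show Lp.compMeasurePreserving (fun t => t - s)
        (measurePreserving_sub_right volume s) v = Translate s v from rfl, h0] at this
      simpa using this.symm
    simpa using norm_eq_zero.mp this
  -- a.e. identity
  have hae : ∀ᵐ t : ℝ, v (t - s) = z * v t := by
    have h1 := stmt17_translate_coeFn s v
    have h2 : ⇑(z • v) =ᵐ[volume] fun t => z * v t := Lp.coeFn_smul z v
    rw [hv] at h1
    filter_upwards [h1, h2] with t ht1 ht2
    rw [← ht1, ht2]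
  set I : ℤ → Set ℝ := fun n => Set.Ico ((n : ℝ) * s) ((n : ℝ) * s + s) with hI
  set m : ℤ → ℝ := fun n => ∫ t in I n, ‖v t‖ ^ 2 with hm
  have hWint : Integrable (fun t : ℝ => ‖v t‖ ^ 2) volume := by
    have h := ((Lp.memLp v).norm_rpow (by norm_num) (by norm_num))
    rw [memLp_one_iff_integrable] at h
    refine h.congr ?_
    filter_upwards with t
    norm_num
  have hnn : ∀ n, 0 ≤ m n := fun n =>
    setIntegral_nonneg measurableSet_Ico (fun t _ => by positivity)
  have hB : ∀ n, m n ≤ ∫ t, ‖v t‖ ^ 2 := fun n =>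
    setIntegral_le_integral hWint (by filter_upwards with t using by positivity)
  set B := ∫ t, ‖v t‖ ^ 2 with hBdef
  set w : ℝ := ‖z‖ ^ 2 with hw
  have hw0 : 0 < w := pow_pos (norm_pos_iff.mpr hz) 2
  have hstep : ∀ n : ℤ, m n = w * m (n + 1) := by
    intro n
    have hemb : MeasurableEmbedding (fun t : ℝ => t - s) :=
      (MeasurableEquiv.subRight s).measurableEmbedding
    have hpre : (fun t : ℝ => t - s) ⁻¹' I n = I (n + 1) := by
      ext t
      simp only [hI, Set.mem_preimage, Set.mem_Ico]
      push_cast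
      constructor <;> intro h <;> constructor <;> linarith [h.1, h.2]
    have key := (measurePreserving_sub_right (volume : Measure ℝ) s).setIntegral_preimage_emb
      hemb (fun t => ‖v t‖ ^ 2) (I n)
    rw [hpre] at key
    have : ∫ t in I (n + 1), ‖v (t - s)‖ ^ 2 = ∫ t in I (n + 1), w * ‖v t‖ ^ 2 := by
      refine setIntegral_congr_ae measurableSet_Ico ?_
      filter_upwards [hae] with t ht _
      rw [ht]
      simp [hw, norm_mul, mul_pow]
    rw [this, integral_const_mul] at key
    exact key.symm
  have hiter : ∀ (n : ℤ) (k : ℕ), m n = w ^ k * m (n + k) := by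
    intro n k
    induction k generalizing n with
    | zero => simp
    | succ k ih =>
      rw [hstep n, ih (n + 1), pow_succ]
      have harg : n + 1 + (k : ℤ) = n + ((k + 1 : ℕ) : ℤ) := by push_cast; ring
      rw [harg]
      ring
  have hall : ∀ n : ℤ, m n = 0 := by
    rcases lt_trichotomy w 1 with hlt | heq | hgt
    · intro n
      refine le_antisymm ?_ (hnn n)
      have hle : ∀ k : ℕ, m n ≤ w ^ k * B := fun k => by
        rw [hiter n k]
        exact mul_le_mul_of_nonneg_left (hB _) (le_of_lt (pow_pos hw0 k))
      have htend : Filter.Tendsto (fun k : ℕ => w ^ k * B) Filter.atTop (nhds 0) := by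
        simpa using (tendsto_pow_atTop_nhds_zero_of_lt_one hw0.le hlt).mul_const B
      exact le_of_tendsto_of_tendsto' tendsto_const_nhds htend hle
    · have hconst : ∀ n : ℤ, m n = m 0 := by
        intro n
        rcases le_or_gt 0 n with h | h
        · obtain ⟨k, rfl⟩ := Int.eq_ofNat_of_zero_le h
          have h2 := hiter 0 k
          rw [heq] at h2
          simpa using h2.symm
        · have h2 := hiter n (-n).toNat
          have harg : n + (((-n).toNat : ℕ) : ℤ) = 0 := by
            rw [Int.toNat_of_nonneg (by omega)]; ring
          rw [harg, heq] at h2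
          simpa using h2
      intro n
      rw [hconst n]
      refine le_antisymm ?_ (by rw [← hconst 0]; exact hnn 0)
      by_contra hpos
      push_neg at hpos
      have hsum : ∀ N : ℕ, (N : ℝ) * m 0 ≤ B := by
        intro N
        have hdisj : (↑(Finset.range N) : Set ℕ).Pairwise
            (Function.onFun Disjoint fun k : ℕ => I (k : ℤ)) := by
          intro a _ b _ hab
          have hd : ∀ a b : ℕ, a < b → Disjoint (I (a : ℤ)) (I (b : ℤ)) := by
            intro a b h
            refine Set.disjoint_left.mpr fun t ht ht' => ?_
            simp only [hI, Set.mem_Ico] at ht ht'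
            have hcast : (a : ℝ) + 1 ≤ (b : ℝ) := by exact_mod_cast h
            push_cast at ht ht'
            nlinarith [ht.1, ht.2, ht'.1, ht'.2]
          rcases lt_or_gt_of_ne hab with h | h
          · exact hd a b h
          · exact (hd b a h).symm
        have hun := integral_biUnion_finset (Finset.range N)
          (f := fun t : ℝ => ‖v t‖ ^ 2) (fun i _ => measurableSet_Ico) hdisj
          (fun i _ => hWint.integrableOn)
        have hle : ∫ t in ⋃ i ∈ Finset.range N, I (i : ℤ), ‖v t‖ ^ 2 ≤ B :=
          setIntegral_le_integral hWint (by filter_upwards with t using by positivity)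
        rw [hun] at hle
        have hle2 : ∑ i ∈ Finset.range N, m (i : ℤ) ≤ B := hle
        have heq2 : ∑ i ∈ Finset.range N, m (i : ℤ) = (N : ℝ) * m 0 := by
          rw [show ∑ i ∈ Finset.range N, m (i : ℤ) = ∑ _i ∈ Finset.range N, m 0 from
            Finset.sum_congr rfl fun i _ => hconst (i : ℤ)]
          rw [Finset.sum_const, Finset.card_range, nsmul_eq_mul]
        rw [heq2] at hle2
        exact hle2
      obtain ⟨N, hN⟩ := exists_nat_gt (B / m 0)
      have := hsum N
      rw [div_lt_iff₀ hpos] at hN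
      linarith
    · intro n
      refine le_antisymm ?_ (hnn n)
      have hle : ∀ k : ℕ, m n ≤ B * (1 / w) ^ k := by
        intro k
        have h2 := hiter (n - k) k
        rw [show n - (k : ℤ) + (k : ℤ) = n by ring] at h2
        have h3 : w ^ k * m n ≤ B := by rw [← h2]; exact hB _
        have h4 : m n * w ^ k ≤ B := by rw [mul_comm]; exact h3
        rw [one_div, inv_pow, mul_comm, inv_mul_eq_div, le_div_iff₀ (pow_pos hw0 k)]
        exact h4
      have htend : Filter.Tendsto (fun k : ℕ => B * (1 / w) ^ k) Filter.atTop (nhds 0) := by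
        have h1w : (1 : ℝ) / w < 1 := by
          rw [div_lt_one hw0]; exact hgt
        simpa using (tendsto_pow_atTop_nhds_zero_of_lt_one (by positivity) h1w).const_mul B
      exact le_of_tendsto_of_tendsto' tendsto_const_nhds htend hle
  have hzero : ∀ᵐ t : ℝ, v t = 0 := by
    have hnull : ∀ n : ℤ, volume ({t : ℝ | v t ≠ 0} ∩ I n) = 0 := by
      intro n
      have h1 : (fun t => ‖v t‖ ^ 2) =ᵐ[volume.restrict (I n)] 0 :=
        (integral_eq_zero_iff_of_nonneg (fun t => by positivity)
          hWint.integrableOn).mp (hall n)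
      have h1' : ∀ᵐ t ∂(volume.restrict (I n)), v t = 0 := by
        filter_upwards [h1] with t ht
        have ht' : ‖v t‖ ^ 2 = 0 := ht
        have : ‖v t‖ = 0 := by
          have := pow_eq_zero_iff (n := 2) (by norm_num) |>.mp ht'
          exact this
        exact norm_eq_zero.mp this
      have h2 : (volume.restrict (I n)) {t : ℝ | v t ≠ 0} = 0 := ae_iff.mp h1'
      rw [Measure.restrict_apply' measurableSet_Ico] at h2
      exact h2
    have hcover : {t : ℝ | v t ≠ 0} ⊆ ⋃ n : ℤ, ({t : ℝ | v t ≠ 0} ∩ I n) := by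
      intro t ht
      have : ∃ n : ℤ, t ∈ I n := by
        refine ⟨⌊t / s⌋, ?_⟩
        simp only [hI, Set.mem_Ico]
        constructor
        · rw [← le_div_iff₀ hs]; exact Int.floor_le _
        · have := Int.lt_floor_add_one (t / s)
          rw [div_lt_iff₀ hs] at this
          linarith
      obtain ⟨n, hn⟩ := this
      exact Set.mem_iUnion.mpr ⟨n, ht, hn⟩
    have : volume {t : ℝ | v t ≠ 0} = 0 :=
      measure_mono_null hcover (measure_iUnion_null hnull)
    exact ae_iff.mpr this
  have : ⇑v =ᵐ[volume] 0 := hzero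
  exact (Lp.eq_zero_iff_ae_eq_zero).mpr this

noncomputable def Tmap (s : ℝ) : Module.End ℂ (Lp ℂ 2 (volume : Measure ℝ)) :=
  Lp.compMeasurePreservingₗ ℂ (fun t => t - s) (measurePreserving_sub_right volume s)

lemma Tmap_apply (s : ℝ) (f : Lp ℂ 2 (volume : Measure ℝ)) : Tmap s f = Translate s f := rfl

lemma stmt17_translate_injective (τ : ℝ) (f : Lp ℂ 2 (volume : Measure ℝ))
    (h : Translate τ f = 0) : f = 0 := by
  have hn := Lp.norm_compMeasurePreserving f (measurePreserving_sub_right volume τ)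
  rw [show Lp.compMeasurePreserving (fun t => t - τ)
      (measurePreserving_sub_right volume τ) f = Translate τ f from rfl, h] at hn
  have : ‖f‖ = 0 := by simpa using hn.symm
  simpa using norm_eq_zero.mp this

lemma stmt17_aeval_inj {s : ℝ} (hs : 0 < s) :
    ∀ (n : ℕ) (q : Polynomial ℂ), q.natDegree ≤ n → q ≠ 0 →
    ∀ v : Lp ℂ 2 (volume : Measure ℝ), (Polynomial.aeval (Tmap s) q) v = 0 → v = 0 := by
  intro n
  induction n with
  | zero =>
    intro q hdeg hq v hv
    obtain ⟨a, rfl⟩ := Polynomial.natDegree_eq_zero.mp (Nat.le_zero.mp hdeg)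
    have ha : a ≠ 0 := fun h => hq (by rw [h, map_zero])
    rw [Polynomial.aeval_C, Module.algebraMap_end_apply] at hv
    exact (smul_eq_zero.mp hv).resolve_left ha
  | succ n ih =>
    intro q hdeg hq v hv
    rcases Nat.eq_zero_or_pos q.natDegree with h0 | hpos
    · obtain ⟨a, rfl⟩ := Polynomial.natDegree_eq_zero.mp h0
      have ha : a ≠ 0 := fun h => hq (by rw [h, map_zero])
      rw [Polynomial.aeval_C, Module.algebraMap_end_apply] at hv
      exact (smul_eq_zero.mp hv).resolve_left ha
    · have hdegpos : 0 < q.degree := Polynomial.natDegree_pos_iff_degree_pos.mp hpos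
      obtain ⟨z, hz⟩ := Complex.exists_root hdegpos
      obtain ⟨q', hq'⟩ := Polynomial.dvd_iff_isRoot.mpr hz
      have hq'ne : q' ≠ 0 := by rintro rfl; rw [mul_zero] at hq'; exact hq hq'
      have hdeg' : q'.natDegree ≤ n := by
        have := Polynomial.natDegree_mul (Polynomial.X_sub_C_ne_zero z) hq'ne
        rw [← hq', Polynomial.natDegree_X_sub_C] at this
        omega
      set w := (Polynomial.aeval (Tmap s) q') v with hw
      have hvv : Translate s w = z • w := by
        have h1 : (Tmap s) w - z • w = 0 := by
          rw [← hv, hq', map_mul, Module.End.mul_apply, ← hw, map_sub, Polynomial.aeval_X,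
            Polynomial.aeval_C, LinearMap.sub_apply, Module.algebraMap_end_apply]
        rw [← Tmap_apply]
        exact sub_eq_zero.mp h1
      exact ih q' hdeg' hq'ne v (by rw [← hw]; exact stmt17_eigen hs z w hvv)

lemma stmt17_pow_translate {s : ℝ} (n : ℕ) (f : Lp ℂ 2 (volume : Measure ℝ)) :
    (Tmap s ^ n) f = Translate (s * n) f := by
  induction n generalizing f with
  | zero => simp [stmt17_trans_zero]
  | succ n ih =>
    rw [pow_succ', Module.End.mul_apply, Tmap_apply, ih, stmt17_trans_trans]
    congr 1
    push_cast
    ring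

lemma stmt17_indep {s : ℝ} (hs : 0 < s) (h : Lp ℂ 2 (volume : Measure ℝ)) (hne : h ≠ 0)
    (K : Finset ℤ) (a : ℤ → ℂ)
    (hsum : (∑ k ∈ K, a k • Translate (s * k) h) = 0) :
    ∀ k ∈ K, a k = 0 := by
  by_contra hcon
  push_neg at hcon
  obtain ⟨k₀, hk₀K, hk₀⟩ := hcon
  have hKne : K.Nonempty := ⟨k₀, hk₀K⟩
  set M : ℤ := K.min' hKne with hM
  have hMle : ∀ k ∈ K, M ≤ k := fun k hk => K.min'_le k hk
  set q : Polynomial ℂ := ∑ k ∈ K, Polynomial.monomial (k - M).toNat (a k) with hq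
  have hinj : ∀ k ∈ K, ∀ k' ∈ K, (k - M).toNat = (k' - M).toNat → k = k' := by
    intro k hk k' hk' hkk'
    have h1 := hMle k hk
    have h2 := hMle k' hk'
    omega
  have hqne : q ≠ 0 := by
    intro h0
    have : q.coeff ((k₀ - M).toNat) = a k₀ := by
      rw [hq, Polynomial.finset_sum_coeff]
      rw [Finset.sum_eq_single k₀]
      · simp [Polynomial.coeff_monomial]
      · intro k hk hne'
        rw [Polynomial.coeff_monomial, if_neg]
        intro heq
        exact hne' (hinj k hk k₀ hk₀K heq)
      · intro habs; exact absurd hk₀K habs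
    rw [h0] at this
    simp at this
    exact hk₀ this.symm
  -- each translate in terms of powers
  have hTk : ∀ k ∈ K, Translate (s * k) h =
      Translate (s * M) ((Tmap s ^ (k - M).toNat) h) := by
    intro k hk
    rw [stmt17_pow_translate, stmt17_trans_trans]
    congr 1
    have : (((k - M).toNat : ℤ) : ℝ) = (k : ℝ) - (M : ℝ) := by
      rw [Int.toNat_of_nonneg (by have := hMle k hk; omega : (0:ℤ) ≤ k - M)]
      push_cast
      ring
    push_cast at this ⊢
    rw [this]
    ring
  have hsum2 : Translate (s * M) (∑ k ∈ K, a k • (Tmap s ^ (k - M).toNat) h) = 0 := by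
    rw [← hsum]
    rw [show ∀ f, Translate (s * M) f = Tmap (s * M) f from fun f => rfl]
    rw [map_sum]
    refine Finset.sum_congr rfl fun k hk => ?_
    rw [_root_.map_smul, Tmap_apply, ← hTk k hk]
  have hsum3 : (∑ k ∈ K, a k • (Tmap s ^ (k - M).toNat) h) = 0 :=
    stmt17_translate_injective _ _ hsum2
  have haeval : (Polynomial.aeval (Tmap s) q) h = 0 := by
    rw [hq, map_sum, LinearMap.sum_apply, ← hsum3]
    refine Finset.sum_congr rfl fun k hk => ?_
    rw [Polynomial.aeval_monomial, Module.End.mul_apply, Module.algebraMap_end_apply]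
  exact hne (stmt17_aeval_inj hs q.natDegree q le_rfl hqne h haeval)

-- coeFn of a finite sum
lemma lp_coeFn_sum {ι : Type*} (K : Finset ι) (f : ι → Lp ℂ 2 (volume : Measure ℝ)) :
    ⇑(∑ k ∈ K, f k) =ᵐ[volume] fun t => ∑ k ∈ K, f k t := by
  classical
  induction K using Finset.induction with
  | empty => simp only [Finset.sum_empty]; exact Lp.coeFn_zero ℂ 2 volume
  | @insert a Kp hnotmem ih =>
    rw [Finset.sum_insert hnotmem]
    refine (Lp.coeFn_add _ _).trans ?_
    filter_upwards [ih] with t ht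
    simp only [Pi.add_apply, ht, Finset.sum_insert hnotmem]

-- integrability of the STFT integrand pieces
lemma stmt17_integrable (g : Lp ℂ 2 (volume : Measure ℝ)) (x ω : ℝ) (k : ℤ) (s : ℝ) :
    Integrable (fun t : ℝ => g (s * k - t) * (starRingEnd ℂ) (g (t - x)) *
      Complex.exp (-2 * Real.pi * Complex.I * ω * t)) volume := by
  have h1 : Integrable (fun t : ℝ =>
      (inner ℂ ((Translate x g) t) ((Translate (s * k) (Reflect g)) t) : ℂ)) volume :=
    L2.integrable_inner (𝕜 := ℂ) _ _
  have h2 : Integrable (fun t : ℝ =>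
      (starRingEnd ℂ) (g (t - x)) * g (s * k - t)) volume := by
    refine h1.congr ?_
    filter_upwards [stmt17_translate_coeFn x g, stmt17_translate_reflect_coeFn (s * k) g] with t ht1 ht2
    rw [RCLike.inner_apply, ht1, ht2, mul_comm]
  have h3 : Integrable (fun t : ℝ => Complex.exp (-2 * Real.pi * Complex.I * ω * t) *
      ((starRingEnd ℂ) (g (t - x)) * g (s * k - t))) volume := by
    refine h2.bdd_mul (c := 1) ?_ ?_
    · exact (Complex.continuous_exp.comp (by continuity)).aestronglyMeasurable
    · filter_upwards with t
      rw [Complex.norm_exp]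
      have : (-2 * (Real.pi : ℂ) * Complex.I * ω * t).re = 0 := by
        simp [Complex.mul_re, Complex.mul_im]
      rw [this, Real.exp_zero]
  refine h3.congr ?_
  filter_upwards with t
  ring

lemma lp_coeFn_sum' {ι : Type*} (K : Finset ι) (f : ι → Lp ℂ 2 (volume : Measure ℝ))
    (F : ι → ℝ → ℂ) (h : ∀ k ∈ K, ⇑(f k) =ᵐ[volume] F k) :
    ⇑(∑ k ∈ K, f k) =ᵐ[volume] fun t => ∑ k ∈ K, F k t := by
  refine (lp_coeFn_sum K f).trans ?_
  have hall : ∀ᵐ t ∂(volume : Measure ℝ), ∀ k ∈ K, f k t = F k t :=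
    (Filter.eventually_all_finset K).mpr h
  filter_upwards [hall] with t ht
  exact Finset.sum_congr rfl fun k hk => ht k hk

lemma stmt17_STFT_sum (g : Lp ℂ 2 (volume : Measure ℝ)) (K : Finset ℤ) (d : ℤ → ℂ)
    (s x ω : ℝ) :
    STFT g (∑ k ∈ K, d k • Translate (s * k) (Reflect g)) x ω =
      ∑ k ∈ K, d k * ∫ t : ℝ, g (s * k - t) * (starRingEnd ℂ) (g (t - x)) *
        Complex.exp (-2 * Real.pi * Complex.I * ω * t) := by
  have hf : ⇑(∑ k ∈ K, d k • Translate (s * k) (Reflect g)) =ᵐ[volume]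
      fun t => ∑ k ∈ K, d k * g (s * k - t) := by
    refine lp_coeFn_sum' K _ _ fun k _ => ?_
    refine (Lp.coeFn_smul (d k) _).trans ?_
    filter_upwards [stmt17_translate_reflect_coeFn (s * k) g] with t ht
    simp [ht]
  rw [STFT]
  have h1 : (∫ t : ℝ, (∑ k ∈ K, d k • Translate (s * k) (Reflect g)) t *
      (starRingEnd ℂ) (g (t - x)) * Complex.exp (-2 * Real.pi * Complex.I * ω * t)) =
      ∫ t : ℝ, ∑ k ∈ K, d k * (g (s * k - t) * (starRingEnd ℂ) (g (t - x)) *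
        Complex.exp (-2 * Real.pi * Complex.I * ω * t)) := by
    refine integral_congr_ae ?_
    filter_upwards [hf] with t ht
    rw [ht, Finset.sum_mul, Finset.sum_mul]
    exact Finset.sum_congr rfl fun k _ => by ring
  rw [h1, integral_finset_sum K fun k _ => (stmt17_integrable g x ω k s).const_mul (d k)]
  exact Finset.sum_congr rfl fun k _ => integral_const_mul _ _

lemma stmt17_conj_J (g : Lp ℂ 2 (volume : Measure ℝ)) (x ω a : ℝ) :
    (starRingEnd ℂ) (∫ t : ℝ, g (a - t) * (starRingEnd ℂ) (g (t - x)) *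
        Complex.exp (-2 * Real.pi * Complex.I * ω * t)) =
      Complex.exp (2 * Real.pi * Complex.I * ω * (a + x)) *
        ∫ t : ℝ, g (a - t) * (starRingEnd ℂ) (g (t - x)) *
          Complex.exp (-2 * Real.pi * Complex.I * ω * t) := by
  rw [← integral_conj]
  have h1 : (∫ t : ℝ, (starRingEnd ℂ) (g (a - t) * (starRingEnd ℂ) (g (t - x)) *
      Complex.exp (-2 * Real.pi * Complex.I * ω * t))) =
      ∫ t : ℝ, (starRingEnd ℂ) (g (a - t)) * g (t - x) *
        Complex.exp (2 * Real.pi * Complex.I * ω * t) := by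
    refine integral_congr_ae (Filter.Eventually.of_forall fun t => ?_)
    simp only [map_mul, Complex.conj_conj, ← Complex.exp_conj, map_neg, map_ofNat,
      Complex.conj_ofReal, Complex.conj_I]
    ring_nf
  rw [h1, ← integral_sub_left_eq_self
    (fun t : ℝ => (starRingEnd ℂ) (g (a - t)) * g (t - x) *
      Complex.exp (2 * Real.pi * Complex.I * ω * t)) volume (a + x),
    ← integral_const_mul]
  refine integral_congr_ae (Filter.Eventually.of_forall fun t => ?_)
  simp only
  have e1 : a - (a + x - t) = t - x := by ring
  have e2 : a + x - t - x = a - t := by ring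
  rw [e1, e2]
  have e3 : (2 * (Real.pi : ℂ) * Complex.I * ω * ((a + x - t : ℝ) : ℂ)) =
      2 * Real.pi * Complex.I * ω * ((a : ℂ) + (x : ℂ)) +
        -2 * Real.pi * Complex.I * ω * (t : ℂ) := by
    push_cast
    ring
  rw [e3, Complex.exp_add]
  ring

lemma stmt17_abs_eq (g : Lp ℂ 2 (volume : Measure ℝ)) {s : ℝ} (hs : 0 < s) (c : ℤ →₀ ℂ)
    (x : ℝ) (n : ℤ) :
    ‖STFT g (∑ k ∈ c.support, c k • Translate (s * k) (Reflect g)) x (n / s)‖ =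
      ‖STFT g
        (∑ k ∈ c.support, (starRingEnd ℂ) (c k) • Translate (s * k) (Reflect g)) x (n / s)‖ := by
  set ω : ℝ := (n : ℝ) / s with hω
  set J : ℤ → ℂ := fun k => ∫ t : ℝ, g (s * k - t) * (starRingEnd ℂ) (g (t - x)) *
    Complex.exp (-2 * Real.pi * Complex.I * ω * t) with hJ
  have h1 : STFT g (∑ k ∈ c.support, c k • Translate (s * k) (Reflect g)) x ω
      = ∑ k ∈ c.support, c k * J k := stmt17_STFT_sum g _ _ s x ω
  have h2 : STFT g (∑ k ∈ c.support, (starRingEnd ℂ) (c k) • Translate (s * k) (Reflect g)) x ω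
      = ∑ k ∈ c.support, (starRingEnd ℂ) (c k) * J k := stmt17_STFT_sum g _ _ s x ω
  set E : ℂ := Complex.exp (2 * Real.pi * Complex.I * ω * x) with hE
  have habsE : ‖E‖ = 1 := by
    rw [hE, Complex.norm_exp]
    have : (2 * (Real.pi : ℂ) * Complex.I * ω * x).re = 0 := by
      simp [Complex.mul_re, Complex.mul_im]
    rw [this, Real.exp_zero]
  have hconjJ : ∀ k : ℤ, (starRingEnd ℂ) (J k) = E * J k := by
    intro k
    have h3 := stmt17_conj_J g x ω (s * k)
    rw [hJ]
    rw [h3]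
    congr 1
    have hωs : ω * (s * (k : ℝ)) = (n : ℝ) * (k : ℝ) := by
      rw [hω]; field_simp
    have hc : ((ω : ℂ)) * ((s : ℂ) * (k : ℂ)) = (n : ℂ) * (k : ℂ) := by
      exact_mod_cast hωs
    have harg : (2 * (Real.pi : ℂ) * Complex.I * (ω : ℂ) * (((s * (k : ℝ) : ℝ)) + (x : ℝ)))
        = ((n * k : ℤ) : ℂ) * (2 * Real.pi * Complex.I) +
          2 * Real.pi * Complex.I * (ω : ℂ) * (x : ℂ) := by
      push_cast
      linear_combination (2 * (Real.pi : ℂ) * Complex.I) * hc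
    rw [harg, Complex.exp_add, Complex.exp_int_mul_two_pi_mul_I, one_mul]
  have hconj2 : (starRingEnd ℂ) (∑ k ∈ c.support, (starRingEnd ℂ) (c k) * J k)
      = E * ∑ k ∈ c.support, c k * J k := by
    rw [map_sum, Finset.mul_sum]
    refine Finset.sum_congr rfl fun k _ => ?_
    rw [map_mul, Complex.conj_conj, hconjJ k]
    ring
  rw [h1, h2, ← Complex.norm_conj (∑ k ∈ c.support, (starRingEnd ℂ) (c k) * J k), hconj2,
    norm_mul, habsE, one_mul]

/-- If `g ≠ 0`, `s > 0` and `c` is a finitely supported sequence in `ℓ²_𝒪(ℤ)`, then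
`f₁ = ∑ₖ cₖ T_{sk}(Rg)` and `f₂ = ∑ₖ conj(cₖ) T_{sk}(Rg)` have spectrograms that agree
pointwise on the parallel lines `ℝ × (1/s)ℤ`, yet do not agree up to a global phase. -/
theorem stmt17 (g : Lp ℂ 2 (volume : Measure ℝ)) (hg : g ≠ 0) (s : ℝ) (hs : 0 < s)
    (c : ℤ →₀ ℂ) (hc : NotOnLine fun k => c k) :
    (∀ x : ℝ, ∀ n : ℤ,
      ‖STFT g (∑ k ∈ c.support, c k • Translate (s * k) (Reflect g)) x (n / s)‖ =
      ‖STFT g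
        (∑ k ∈ c.support, (starRingEnd ℂ) (c k) • Translate (s * k) (Reflect g)) x (n / s)‖) ∧
    ¬ SamePhase (∑ k ∈ c.support, c k • Translate (s * k) (Reflect g))
      (∑ k ∈ c.support, (starRingEnd ℂ) (c k) • Translate (s * k) (Reflect g)) := by
  constructor
  · intro x n
    exact stmt17_abs_eq g hs c x n
  · rintro ⟨ν, hν, heq⟩
    have hRg : Reflect g ≠ 0 := by
      intro h0
      apply hg
      have hn := Lp.norm_compMeasurePreserving g (Measure.measurePreserving_neg volume)
      rw [show Lp.compMeasurePreserving (fun t : ℝ => -t)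
        (Measure.measurePreserving_neg volume) g = Reflect g from rfl, h0] at hn
      have : ‖g‖ = 0 := by simpa using hn.symm
      exact norm_eq_zero.mp this
    have hsum : (∑ k ∈ c.support,
        (c k - ν * (starRingEnd ℂ) (c k)) • Translate (s * k) (Reflect g)) = 0 := by
      have hsplit : ∑ k ∈ c.support,
          (c k - ν * (starRingEnd ℂ) (c k)) • Translate (s * k) (Reflect g)
          = (∑ k ∈ c.support, c k • Translate (s * k) (Reflect g)) -
            ν • (∑ k ∈ c.support, (starRingEnd ℂ) (c k) • Translate (s * k) (Reflect g)) := by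
        rw [Finset.smul_sum, ← Finset.sum_sub_distrib]
        refine Finset.sum_congr rfl fun k _ => ?_
        rw [sub_smul, smul_smul]
      rw [hsplit, heq, sub_self]
    have hall := stmt17_indep hs (Reflect g) hRg c.support
      (fun k => c k - ν * (starRingEnd ℂ) (c k)) hsum
    have hck : ∀ k : ℤ, c k = ν * (starRingEnd ℂ) (c k) := by
      intro k
      by_cases hk : k ∈ c.support
      · exact sub_eq_zero.mp (hall k hk)
      · rw [Finsupp.notMem_support_iff.mp hk]
        simp
    apply hc
    set β : ℝ := ν.arg with hβ
    have hν1 : ‖ν‖ = 1 := by rwa []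
    have hνexp : ν = Complex.exp (β * Complex.I) := by
      have := Complex.norm_mul_exp_arg_mul_I ν
      rw [hν1] at this
      simpa using this.symm
    refine ⟨β / 2, fun k => ?_⟩
    set w : ℂ := Complex.exp (-(((β / 2 : ℝ)) : ℂ) * Complex.I) * c k with hw
    have hw2 : w = Complex.exp (((β / 2 : ℝ) : ℂ) * Complex.I) * (starRingEnd ℂ) (c k) := by
      have h4 : c k = Complex.exp ((β : ℂ) * Complex.I) * (starRingEnd ℂ) (c k) := by
        rw [← hνexp]; exact hck k
      rw [hw]
      conv_lhs => rw [h4]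
      rw [← mul_assoc, ← Complex.exp_add]
      congr 2
      push_cast
      ring
    have hconjw : (starRingEnd ℂ) w = w := by
      have hcw : (starRingEnd ℂ) w
          = Complex.exp (((β / 2 : ℝ) : ℂ) * Complex.I) * (starRingEnd ℂ) (c k) := by
        rw [hw, map_mul, ← Complex.exp_conj]
        congr 2
        simp only [map_mul, map_neg, Complex.conj_ofReal, Complex.conj_I]
        ring
      rw [hcw, ← hw2]
    have hwre : ((w.re : ℝ) : ℂ) = w := Complex.conj_eq_iff_re.mp hconjw
    refine ⟨w.re, ?_⟩
    rw [hwre, hw, ← mul_assoc, ← Complex.exp_add]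
    have : (((β / 2 : ℝ) : ℂ)) * Complex.I + -(((β / 2 : ℝ) : ℂ)) * Complex.I = 0 := by ring
    rw [this, Complex.exp_zero, one_mul]
end
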